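/- Let X : H0 -> H1 be any everywhere-defined bounded solution of the Riccati equation A1 X - X A0 - X V X + V* = 0. Let R be the set of all closed subspaces L of H0 such that L ⊆ Ker(I - X*X) ∩ Ker(X V X - V*) and L reduces both A0 and V X, and let R* be the set of all closed subspaces L* of H1 such that L* ⊆ Ker(I - XX*) ∩ Ker(X* V* X* - V) and L* reduces both A1 and V* X*. Then the map sending L to its image X(L) = {Xx : x in L} is a bijection from R onto R*, with inverse sending L* to X*(L*) = {X*y : y in L*}. -/

import Mathlib

noncomputable section

local notation "⟪" x ", " y "⟫_ℂ" => @inner ℂ _ _ x y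

set_option maxHeartbeats 1000000 in
open ContinuousLinearMap in
lemma riccati_aux
    {E F : Type*}
    [NormedAddCommGroup E] [InnerProductSpace ℂ E] [CompleteSpace E]
    [NormedAddCommGroup F] [InnerProductSpace ℂ F] [CompleteSpace F]
    (A : E →L[ℂ] E) (B : F →L[ℂ] F) (W : F →L[ℂ] E)
    (hB : IsSelfAdjoint B)
    (X : E →L[ℂ] F)
    (L : Submodule ℂ E)
    (hLc : IsClosed (L : Set E))
    (hker : L ≤ LinearMap.ker (τ₁₂ := RingHom.id ℂ) (M₂ := E) (ContinuousLinearMap.id ℂ E - (adjoint X).comp X) ⊓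
        LinearMap.ker (τ₁₂ := RingHom.id ℂ) (M₂ := F) (X.comp (W.comp X) - adjoint W))
    (hBA : ∀ x ∈ L, B (X x) = X (A x))
    (hA1 : L.map (σ₁₂ := RingHom.id ℂ) (M₂ := E) A ≤ L) (hA2 : Lᗮ.map (σ₁₂ := RingHom.id ℂ) (M₂ := E) A ≤ Lᗮ)
    (hW1 : L.map (σ₁₂ := RingHom.id ℂ) (M₂ := E) (W.comp X) ≤ L) (hW2 : Lᗮ.map (σ₁₂ := RingHom.id ℂ) (M₂ := E) (W.comp X) ≤ Lᗮ) :
    (IsClosed ((L.map (σ₁₂ := RingHom.id ℂ) (M₂ := F) X : Submodule ℂ F) : Set F) ∧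
      L.map (σ₁₂ := RingHom.id ℂ) (M₂ := F) X ≤ LinearMap.ker (τ₁₂ := RingHom.id ℂ) (M₂ := F) (ContinuousLinearMap.id ℂ F - X.comp (adjoint X)) ⊓
        LinearMap.ker (τ₁₂ := RingHom.id ℂ) (M₂ := E) ((adjoint X).comp ((adjoint W).comp (adjoint X)) - W) ∧
      ((L.map (σ₁₂ := RingHom.id ℂ) (M₂ := F) X).map (σ₁₂ := RingHom.id ℂ) (M₂ := F) B ≤ L.map (σ₁₂ := RingHom.id ℂ) (M₂ := F) X ∧ (L.map (σ₁₂ := RingHom.id ℂ) (M₂ := F) X)ᗮ.map (σ₁₂ := RingHom.id ℂ) (M₂ := F) B ≤ (L.map (σ₁₂ := RingHom.id ℂ) (M₂ := F) X)ᗮ) ∧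
      ((L.map (σ₁₂ := RingHom.id ℂ) (M₂ := F) X).map (σ₁₂ := RingHom.id ℂ) (M₂ := F) ((adjoint W).comp (adjoint X)) ≤ L.map (σ₁₂ := RingHom.id ℂ) (M₂ := F) X ∧
        (L.map (σ₁₂ := RingHom.id ℂ) (M₂ := F) X)ᗮ.map (σ₁₂ := RingHom.id ℂ) (M₂ := F) ((adjoint W).comp (adjoint X)) ≤ (L.map (σ₁₂ := RingHom.id ℂ) (M₂ := F) X)ᗮ)) ∧
    (L.map (σ₁₂ := RingHom.id ℂ) (M₂ := F) X).map ((adjoint X : F →L[ℂ] E) : F →ₗ[ℂ] E) = L := by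
  haveI : CompleteSpace L := hLc.completeSpace_coe
  -- basic pointwise facts
  have h2 : ∀ x ∈ L, adjoint X (X x) = x := by
    intro x hx
    have h := (Submodule.mem_inf.mp (hker hx)).1
    rw [LinearMap.mem_ker] at h
    have h' : x - adjoint X (X x) = 0 := by simpa using h
    rw [sub_eq_zero] at h'
    exact h'.symm
  have h3 : ∀ x ∈ L, X (W (X x)) = adjoint W x := by
    intro x hx
    have h := (Submodule.mem_inf.mp (hker hx)).2
    rw [LinearMap.mem_ker] at h
    have h' : X (W (X x)) - adjoint W x = 0 := by simpa using h
    rwa [sub_eq_zero] at h'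
  have hWXmem : ∀ x ∈ L, W (X x) ∈ L := fun x hx =>
    hW1 (Submodule.mem_map_of_mem (f := (W.comp X : E →ₗ[ℂ] E)) hx)
  have hAmem : ∀ x ∈ L, A x ∈ L := fun x hx =>
    hA1 (Submodule.mem_map_of_mem (f := (A : E →ₗ[ℂ] E)) hx)
  -- key identity (**) : W (X x) = X† (W† x) on L
  have hstar2 : ∀ x ∈ L, W (X x) = adjoint X (adjoint W x) := by
    intro x hx
    apply ext_inner_left ℂ
    intro z
    set z0 : E := (L.orthogonalProjectionOnto z : E) with hz0def
    have hz0 : z0 ∈ L := Submodule.coe_mem _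
    have hz1 : z - z0 ∈ Lᗮ := Submodule.sub_starProjection_mem_orthogonal z
    have e1 : ⟪z - z0, W (X x)⟫_ℂ = 0 :=
      (Submodule.mem_orthogonal' L _).mp hz1 _ (hWXmem x hx)
    have e2 : ⟪z - z0, adjoint X (adjoint W x)⟫_ℂ = 0 := by
      rw [adjoint_inner_right, adjoint_inner_right]
      have hmem : W (X (z - z0)) ∈ Lᗮ :=
        hW2 (Submodule.mem_map_of_mem (f := (W.comp X : E →ₗ[ℂ] E)) hz1)
      exact (Submodule.mem_orthogonal' L _).mp hmem x hx
    have e3 : ⟪z0, W (X x)⟫_ℂ = ⟪z0, adjoint X (adjoint W x)⟫_ℂ := by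
      conv_lhs => rw [← h2 z0 hz0]
      rw [adjoint_inner_left, h3 x hx, adjoint_inner_right, adjoint_inner_right]
      exact (adjoint_inner_right W _ _).symm
    calc ⟪z, W (X x)⟫_ℂ = ⟪z0 + (z - z0), W (X x)⟫_ℂ := by rw [add_sub_cancel]
      _ = ⟪z0, W (X x)⟫_ℂ + ⟪z - z0, W (X x)⟫_ℂ := inner_add_left _ _ _
      _ = ⟪z0, adjoint X (adjoint W x)⟫_ℂ + ⟪z - z0, adjoint X (adjoint W x)⟫_ℂ := by
          rw [e1, e2, e3]
      _ = ⟪z0 + (z - z0), adjoint X (adjoint W x)⟫_ℂ := (inner_add_left _ _ _).symm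
      _ = ⟪z, adjoint X (adjoint W x)⟫_ℂ := by rw [add_sub_cancel]
  -- closedness of the image
  have hnorm : ∀ x : L, ‖X (x : E)‖ = ‖(x : E)‖ := by
    intro x
    have h : ⟪X (x : E), X (x : E)⟫_ℂ = ⟪(x : E), (x : E)⟫_ℂ := by
      rw [← adjoint_inner_left, h2 _ x.2]
    rw [norm_eq_sqrt_re_inner (𝕜 := ℂ), norm_eq_sqrt_re_inner (𝕜 := ℂ) (x : E), h]
  have hclosed : IsClosed ((L.map (σ₁₂ := RingHom.id ℂ) (M₂ := F) X : Submodule ℂ F) : Set F) := by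
    let f : L →ₗᵢ[ℂ] F := ⟨X.toLinearMap.comp L.subtype, hnorm⟩
    have hrange : Set.range f = ((L.map (σ₁₂ := RingHom.id ℂ) (M₂ := F) X : Submodule ℂ F) : Set F) := by
      ext y
      simp only [Set.mem_range, Submodule.map_coe, Set.mem_image, SetLike.mem_coe]
      constructor
      · rintro ⟨x, rfl⟩; exact ⟨x, x.2, rfl⟩
      · rintro ⟨x, hx, rfl⟩; exact ⟨⟨x, hx⟩, rfl⟩
    rw [← hrange]
    exact f.isometry.isClosedEmbedding.isClosed_range
  -- kernel conditions for the image
  have hkerM : L.map (σ₁₂ := RingHom.id ℂ) (M₂ := F) X ≤ LinearMap.ker (τ₁₂ := RingHom.id ℂ) (M₂ := F) (ContinuousLinearMap.id ℂ F - X.comp (adjoint X)) ⊓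
      LinearMap.ker (τ₁₂ := RingHom.id ℂ) (M₂ := E) ((adjoint X).comp ((adjoint W).comp (adjoint X)) - W) := by
    rintro y hy
    obtain ⟨x, hx, rfl⟩ := hy
    refine Submodule.mem_inf.mpr ⟨?_, ?_⟩
    · rw [LinearMap.mem_ker]
      show (ContinuousLinearMap.id ℂ F - X.comp (adjoint X)) (X x) = 0
      rw [ContinuousLinearMap.sub_apply, ContinuousLinearMap.comp_apply,
        ContinuousLinearMap.id_apply, h2 x hx, sub_self]
    · rw [LinearMap.mem_ker]
      show ((adjoint X).comp ((adjoint W).comp (adjoint X)) - W) (X x) = 0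
      rw [ContinuousLinearMap.sub_apply, ContinuousLinearMap.comp_apply,
        ContinuousLinearMap.comp_apply, h2 x hx, ← hstar2 x hx, sub_self]
  -- B-invariance
  have hBM1 : (L.map (σ₁₂ := RingHom.id ℂ) (M₂ := F) X).map (σ₁₂ := RingHom.id ℂ) (M₂ := F) B ≤ L.map (σ₁₂ := RingHom.id ℂ) (M₂ := F) X := by
    rintro y ⟨z, hz, rfl⟩
    obtain ⟨x, hx, rfl⟩ := hz
    exact ⟨A x, hAmem x hx, (hBA x hx).symm⟩
  have hBM2 : (L.map (σ₁₂ := RingHom.id ℂ) (M₂ := F) X)ᗮ.map (σ₁₂ := RingHom.id ℂ) (M₂ := F) B ≤ (L.map (σ₁₂ := RingHom.id ℂ) (M₂ := F) X)ᗮ := by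
    rintro y ⟨w, hw, rfl⟩
    rw [Submodule.mem_orthogonal]
    intro u hu
    have : ⟪u, B w⟫_ℂ = ⟪B u, w⟫_ℂ := by
      conv_lhs => rw [← hB.adjoint_eq]
      rw [adjoint_inner_right]
    show ⟪u, B w⟫_ℂ = 0
    rw [this]
    exact hw (B u) (hBM1 (Submodule.mem_map_of_mem (f := (B : F →ₗ[ℂ] F)) hu))
  -- W† X†-invariance
  have hWM1 : (L.map (σ₁₂ := RingHom.id ℂ) (M₂ := F) X).map (σ₁₂ := RingHom.id ℂ) (M₂ := F) ((adjoint W).comp (adjoint X)) ≤ L.map (σ₁₂ := RingHom.id ℂ) (M₂ := F) X := by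
    rintro y ⟨z, hz, rfl⟩
    obtain ⟨x, hx, rfl⟩ := hz
    refine ⟨W (X x), hWXmem x hx, ?_⟩
    show X (W (X x)) = ((adjoint W).comp (adjoint X)) (X x)
    rw [ContinuousLinearMap.comp_apply, h2 x hx]
    exact h3 x hx
  have hWM2 : (L.map (σ₁₂ := RingHom.id ℂ) (M₂ := F) X)ᗮ.map (σ₁₂ := RingHom.id ℂ) (M₂ := F) ((adjoint W).comp (adjoint X)) ≤ (L.map (σ₁₂ := RingHom.id ℂ) (M₂ := F) X)ᗮ := by
    rintro y ⟨w, hw, rfl⟩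
    rw [Submodule.mem_orthogonal]
    rintro u ⟨x, hx, rfl⟩
    show ⟪X x, ((adjoint W).comp (adjoint X)) w⟫_ℂ = 0
    rw [ContinuousLinearMap.comp_apply, adjoint_inner_right, adjoint_inner_right]
    exact hw _ (Submodule.mem_map_of_mem (f := (X : E →ₗ[ℂ] F)) (hWXmem x hx))
  -- inverse identity
  have hinv : (L.map (σ₁₂ := RingHom.id ℂ) (M₂ := F) X).map ((adjoint X : F →L[ℂ] E) : F →ₗ[ℂ] E) = L := by
    apply le_antisymm
    · rintro x ⟨y, ⟨z, hz, rfl⟩, rfl⟩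
      show adjoint X (X z) ∈ L
      rw [h2 z hz]
      exact hz
    · intro x hx
      exact ⟨X x, Submodule.mem_map_of_mem (f := (X : E →ₗ[ℂ] F)) hx, h2 x hx⟩
  exact ⟨⟨hclosed, hkerM, ⟨hBM1, hBM2⟩, ⟨hWM1, hWM2⟩⟩, hinv⟩

set_option maxHeartbeats 2000000 in
/-- Let `X : H₀ → H₁` be a bounded solution of the Riccati equation.
Let `R` be the set of all closed subspaces `L ⊆ Ker (I - X* X) ⊓ Ker (X V X - V*)` of `H₀`
reducing both `A₀` and `V X`, and `R*` the set of all closed subspaces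
`L* ⊆ Ker (I - X X*) ⊓ Ker (X* V* X* - V)` of `H₁` reducing both `A₁` and `V* X*`.
Then `L ↦ X(L)` is a bijection from `R` onto `R*` with inverse `L* ↦ X*(L*)`. -/
theorem image_bijection_reducing_subspaces
    {H0 H1 : Type*}
    [NormedAddCommGroup H0] [InnerProductSpace ℂ H0] [CompleteSpace H0]
    [TopologicalSpace.SeparableSpace H0]
    [NormedAddCommGroup H1] [InnerProductSpace ℂ H1] [CompleteSpace H1]
    [TopologicalSpace.SeparableSpace H1]
    (A0 : H0 →L[ℂ] H0) (A1 : H1 →L[ℂ] H1) (V : H1 →L[ℂ] H0)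
    (hA0 : IsSelfAdjoint A0) (hA1 : IsSelfAdjoint A1)
    (X : H0 →L[ℂ] H1)
    (hX : A1.comp X - X.comp A0 - X.comp (V.comp X) + ContinuousLinearMap.adjoint V = 0) :
    Set.BijOn (fun L : Submodule ℂ H0 => L.map (σ₁₂ := RingHom.id ℂ) X)
      {L : Submodule ℂ H0 | IsClosed (L : Set H0) ∧
        L ≤ LinearMap.ker (τ₁₂ := RingHom.id ℂ) (M₂ := H0) (ContinuousLinearMap.id ℂ H0 - (ContinuousLinearMap.adjoint X).comp X) ⊓
            LinearMap.ker (τ₁₂ := RingHom.id ℂ) (M₂ := H1) (X.comp (V.comp X) - ContinuousLinearMap.adjoint V) ∧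
        (L.map (σ₁₂ := RingHom.id ℂ) A0 ≤ L ∧ Lᗮ.map (σ₁₂ := RingHom.id ℂ) A0 ≤ Lᗮ) ∧
        (L.map (σ₁₂ := RingHom.id ℂ) (V.comp X) ≤ L ∧ Lᗮ.map (σ₁₂ := RingHom.id ℂ) (V.comp X) ≤ Lᗮ)}
      {Lstar : Submodule ℂ H1 | IsClosed (Lstar : Set H1) ∧
        Lstar ≤
          LinearMap.ker (τ₁₂ := RingHom.id ℂ) (M₂ := H1) (ContinuousLinearMap.id ℂ H1 - X.comp (ContinuousLinearMap.adjoint X)) ⊓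
          LinearMap.ker (τ₁₂ := RingHom.id ℂ) (M₂ := H0) ((ContinuousLinearMap.adjoint X).comp
            ((ContinuousLinearMap.adjoint V).comp (ContinuousLinearMap.adjoint X)) - V) ∧
        (Lstar.map (σ₁₂ := RingHom.id ℂ) A1 ≤ Lstar ∧ Lstarᗮ.map (σ₁₂ := RingHom.id ℂ) A1 ≤ Lstarᗮ) ∧
        (Lstar.map (σ₁₂ := RingHom.id ℂ) ((ContinuousLinearMap.adjoint V).comp (ContinuousLinearMap.adjoint X)) ≤ Lstar ∧
          Lstarᗮ.map (σ₁₂ := RingHom.id ℂ) ((ContinuousLinearMap.adjoint V).comp (ContinuousLinearMap.adjoint X))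
            ≤ Lstarᗮ)} ∧
    Set.InvOn (fun Lstar : Submodule ℂ H1 => Lstar.map (σ₁₂ := RingHom.id ℂ) (ContinuousLinearMap.adjoint X))
      (fun L : Submodule ℂ H0 => L.map (σ₁₂ := RingHom.id ℂ) X)
      {L : Submodule ℂ H0 | IsClosed (L : Set H0) ∧
        L ≤ LinearMap.ker (τ₁₂ := RingHom.id ℂ) (M₂ := H0) (ContinuousLinearMap.id ℂ H0 - (ContinuousLinearMap.adjoint X).comp X) ⊓
            LinearMap.ker (τ₁₂ := RingHom.id ℂ) (M₂ := H1) (X.comp (V.comp X) - ContinuousLinearMap.adjoint V) ∧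
        (L.map (σ₁₂ := RingHom.id ℂ) A0 ≤ L ∧ Lᗮ.map (σ₁₂ := RingHom.id ℂ) A0 ≤ Lᗮ) ∧
        (L.map (σ₁₂ := RingHom.id ℂ) (V.comp X) ≤ L ∧ Lᗮ.map (σ₁₂ := RingHom.id ℂ) (V.comp X) ≤ Lᗮ)}
      {Lstar : Submodule ℂ H1 | IsClosed (Lstar : Set H1) ∧
        Lstar ≤
          LinearMap.ker (τ₁₂ := RingHom.id ℂ) (M₂ := H1) (ContinuousLinearMap.id ℂ H1 - X.comp (ContinuousLinearMap.adjoint X)) ⊓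
          LinearMap.ker (τ₁₂ := RingHom.id ℂ) (M₂ := H0) ((ContinuousLinearMap.adjoint X).comp
            ((ContinuousLinearMap.adjoint V).comp (ContinuousLinearMap.adjoint X)) - V) ∧
        (Lstar.map (σ₁₂ := RingHom.id ℂ) A1 ≤ Lstar ∧ Lstarᗮ.map (σ₁₂ := RingHom.id ℂ) A1 ≤ Lstarᗮ) ∧
        (Lstar.map (σ₁₂ := RingHom.id ℂ) ((ContinuousLinearMap.adjoint V).comp (ContinuousLinearMap.adjoint X)) ≤ Lstar ∧
          Lstarᗮ.map (σ₁₂ := RingHom.id ℂ) ((ContinuousLinearMap.adjoint V).comp (ContinuousLinearMap.adjoint X))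
            ≤ Lstarᗮ)} := by
  have hadj : (ContinuousLinearMap.adjoint X).comp A1 - A0.comp (ContinuousLinearMap.adjoint X) -
      ((ContinuousLinearMap.adjoint X).comp (ContinuousLinearMap.adjoint V)).comp
        (ContinuousLinearMap.adjoint X) + V = 0 := by
    have h := congrArg (fun T : H0 →L[ℂ] H1 => ContinuousLinearMap.adjoint T) hX
    simpa only [map_sub, map_add, map_zero, ContinuousLinearMap.adjoint_comp,
      ContinuousLinearMap.adjoint_adjoint, hA0.adjoint_eq, hA1.adjoint_eq] using h
  have fwd : ∀ L : Submodule ℂ H0,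
      L ∈ {L : Submodule ℂ H0 | IsClosed (L : Set H0) ∧
        L ≤ LinearMap.ker (τ₁₂ := RingHom.id ℂ) (M₂ := H0) (ContinuousLinearMap.id ℂ H0 - (ContinuousLinearMap.adjoint X).comp X) ⊓
            LinearMap.ker (τ₁₂ := RingHom.id ℂ) (M₂ := H1) (X.comp (V.comp X) - ContinuousLinearMap.adjoint V) ∧
        (L.map (σ₁₂ := RingHom.id ℂ) A0 ≤ L ∧ Lᗮ.map (σ₁₂ := RingHom.id ℂ) A0 ≤ Lᗮ) ∧
        (L.map (σ₁₂ := RingHom.id ℂ) (V.comp X) ≤ L ∧ Lᗮ.map (σ₁₂ := RingHom.id ℂ) (V.comp X) ≤ Lᗮ)} →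
      (L.map (σ₁₂ := RingHom.id ℂ) X ∈ {Lstar : Submodule ℂ H1 | IsClosed (Lstar : Set H1) ∧
        Lstar ≤
          LinearMap.ker (τ₁₂ := RingHom.id ℂ) (M₂ := H1) (ContinuousLinearMap.id ℂ H1 - X.comp (ContinuousLinearMap.adjoint X)) ⊓
          LinearMap.ker (τ₁₂ := RingHom.id ℂ) (M₂ := H0) ((ContinuousLinearMap.adjoint X).comp
            ((ContinuousLinearMap.adjoint V).comp (ContinuousLinearMap.adjoint X)) - V) ∧
        (Lstar.map (σ₁₂ := RingHom.id ℂ) A1 ≤ Lstar ∧ Lstarᗮ.map (σ₁₂ := RingHom.id ℂ) A1 ≤ Lstarᗮ) ∧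
        (Lstar.map (σ₁₂ := RingHom.id ℂ) ((ContinuousLinearMap.adjoint V).comp (ContinuousLinearMap.adjoint X)) ≤ Lstar ∧
          Lstarᗮ.map (σ₁₂ := RingHom.id ℂ) ((ContinuousLinearMap.adjoint V).comp (ContinuousLinearMap.adjoint X))
            ≤ Lstarᗮ)} ∧
        (L.map (σ₁₂ := RingHom.id ℂ) X).map ((ContinuousLinearMap.adjoint X : H1 →L[ℂ] H0) : H1 →ₗ[ℂ] H0) = L) := by
    rintro L ⟨hc, hk, ⟨ha1, ha2⟩, hw1, hw2⟩
    have hBA : ∀ x ∈ L, A1 (X x) = X (A0 x) := by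
      intro x hx
      have h0 := ContinuousLinearMap.ext_iff.mp hX x
      simp only [ContinuousLinearMap.sub_apply, ContinuousLinearMap.add_apply,
        ContinuousLinearMap.comp_apply, ContinuousLinearMap.zero_apply] at h0
      have h1 : X (V (X x)) = ContinuousLinearMap.adjoint V x := by
        have h := (Submodule.mem_inf.mp (hk hx)).2
        rw [LinearMap.mem_ker] at h
        have h' : X (V (X x)) - ContinuousLinearMap.adjoint V x = 0 := by simpa using h
        rwa [sub_eq_zero] at h'
      rw [h1, sub_add_cancel, sub_eq_zero] at h0
      exact h0
    exact riccati_aux A0 A1 V hA1 X L hc hk hBA ha1 ha2 hw1 hw2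
  have bwd : ∀ M : Submodule ℂ H1,
      M ∈ {Lstar : Submodule ℂ H1 | IsClosed (Lstar : Set H1) ∧
        Lstar ≤
          LinearMap.ker (τ₁₂ := RingHom.id ℂ) (M₂ := H1) (ContinuousLinearMap.id ℂ H1 - X.comp (ContinuousLinearMap.adjoint X)) ⊓
          LinearMap.ker (τ₁₂ := RingHom.id ℂ) (M₂ := H0) ((ContinuousLinearMap.adjoint X).comp
            ((ContinuousLinearMap.adjoint V).comp (ContinuousLinearMap.adjoint X)) - V) ∧
        (Lstar.map (σ₁₂ := RingHom.id ℂ) A1 ≤ Lstar ∧ Lstarᗮ.map (σ₁₂ := RingHom.id ℂ) A1 ≤ Lstarᗮ) ∧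
        (Lstar.map (σ₁₂ := RingHom.id ℂ) ((ContinuousLinearMap.adjoint V).comp (ContinuousLinearMap.adjoint X)) ≤ Lstar ∧
          Lstarᗮ.map (σ₁₂ := RingHom.id ℂ) ((ContinuousLinearMap.adjoint V).comp (ContinuousLinearMap.adjoint X))
            ≤ Lstarᗮ)} →
      (M.map (σ₁₂ := RingHom.id ℂ) (ContinuousLinearMap.adjoint X) ∈ {L : Submodule ℂ H0 | IsClosed (L : Set H0) ∧
        L ≤ LinearMap.ker (τ₁₂ := RingHom.id ℂ) (M₂ := H0) (ContinuousLinearMap.id ℂ H0 - (ContinuousLinearMap.adjoint X).comp X) ⊓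
            LinearMap.ker (τ₁₂ := RingHom.id ℂ) (M₂ := H1) (X.comp (V.comp X) - ContinuousLinearMap.adjoint V) ∧
        (L.map (σ₁₂ := RingHom.id ℂ) A0 ≤ L ∧ Lᗮ.map (σ₁₂ := RingHom.id ℂ) A0 ≤ Lᗮ) ∧
        (L.map (σ₁₂ := RingHom.id ℂ) (V.comp X) ≤ L ∧ Lᗮ.map (σ₁₂ := RingHom.id ℂ) (V.comp X) ≤ Lᗮ)} ∧
        (M.map (σ₁₂ := RingHom.id ℂ) (ContinuousLinearMap.adjoint X)).map ((X : H0 →L[ℂ] H1) : H0 →ₗ[ℂ] H1) = M) := by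
    rintro M ⟨hc, hk, ⟨ha1, ha2⟩, hw1, hw2⟩
    have hk' : M ≤ LinearMap.ker (τ₁₂ := RingHom.id ℂ) (M₂ := H1) (ContinuousLinearMap.id ℂ H1 -
          (ContinuousLinearMap.adjoint (ContinuousLinearMap.adjoint X)).comp
            (ContinuousLinearMap.adjoint X)) ⊓
        LinearMap.ker (τ₁₂ := RingHom.id ℂ) (M₂ := H0) ((ContinuousLinearMap.adjoint X).comp
          ((ContinuousLinearMap.adjoint V).comp (ContinuousLinearMap.adjoint X)) -
          ContinuousLinearMap.adjoint (ContinuousLinearMap.adjoint V)) := by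
      simpa only [ContinuousLinearMap.adjoint_adjoint] using hk
    have hBA : ∀ y ∈ M, A0 (ContinuousLinearMap.adjoint X y) =
        ContinuousLinearMap.adjoint X (A1 y) := by
      intro y hy
      have h0 := ContinuousLinearMap.ext_iff.mp hadj y
      simp only [ContinuousLinearMap.sub_apply, ContinuousLinearMap.add_apply,
        ContinuousLinearMap.comp_apply, ContinuousLinearMap.zero_apply] at h0
      have h1 : ContinuousLinearMap.adjoint X (ContinuousLinearMap.adjoint V
          (ContinuousLinearMap.adjoint X y)) = V y := by
        have h := (Submodule.mem_inf.mp (hk hy)).2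
        rw [LinearMap.mem_ker] at h
        have h' : ContinuousLinearMap.adjoint X (ContinuousLinearMap.adjoint V
            (ContinuousLinearMap.adjoint X y)) - V y = 0 := by simpa using h
        rwa [sub_eq_zero] at h'
      rw [h1, sub_add_cancel, sub_eq_zero] at h0
      exact h0.symm
    have h := riccati_aux A1 A0 (ContinuousLinearMap.adjoint V) hA0
      (ContinuousLinearMap.adjoint X) M hc hk' hBA ha1 ha2 hw1 hw2
    constructor
    · have h1 := h.1
      simp only [ContinuousLinearMap.adjoint_adjoint] at h1
      exact h1
    · have h2 := h.2
      simp only [ContinuousLinearMap.adjoint_adjoint] at h2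
      exact h2
  refine ⟨Set.InvOn.bijOn ⟨fun L hL => (fwd L hL).2, fun M hM => (bwd M hM).2⟩
      (fun L hL => (fwd L hL).1) (fun M hM => (bwd M hM).1),
    fun L hL => (fwd L hL).2, fun M hM => (bwd M hM).2⟩

end
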